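/- arXiv:1502.06046 — 2 statements merged into one kernel-verified Lean document; each statement's English description precedes it below -/
import Mathlib

section
/- For λ > 0, the skew normal cdf satisfies F(z) ~ (1/(πλ(1+λ²))) |z|^{-2} e^{-(1+λ²)z²/2} as z → -∞. -/
open Real MeasureTheory Filter Set Topology
set_option maxHeartbeats 1000000

noncomputable def stdNormalPdf (t : ℝ) : ℝ := (Real.sqrt (2 * π))⁻¹ * Real.exp (-t ^ 2 / 2)

noncomputable def stdNormalCdf (z : ℝ) : ℝ := ∫ t in Set.Iic z, stdNormalPdf t

noncomputable def skewNormalCdf (l z : ℝ) : ℝ :=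
  ∫ t in Set.Iic z, 2 * stdNormalPdf t * stdNormalCdf (l * t)

lemma stdNormalPdf_pos (t : ℝ) : 0 < stdNormalPdf t := by
  unfold stdNormalPdf
  positivity

lemma continuous_stdNormalPdf : Continuous stdNormalPdf := by
  unfold stdNormalPdf; fun_prop

lemma integrable_stdNormalPdf : Integrable stdNormalPdf := by
  have h := (integrable_exp_neg_mul_sq (by norm_num : (0:ℝ) < 2⁻¹)).const_mul (Real.sqrt (2*π))⁻¹
  have he : stdNormalPdf = fun t => (Real.sqrt (2*π))⁻¹ * Real.exp (-2⁻¹ * t^2) := by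
    funext t; unfold stdNormalPdf; congr 1; ring_nf
  rw [he]; exact h

lemma hasDerivAt_integral_Iic {f : ℝ → ℝ} (hf : Integrable f) (hc : Continuous f) (z : ℝ) :
    HasDerivAt (fun z => ∫ t in Set.Iic z, f t) (f z) z := by
  have h1 : ∀ u : ℝ, ∫ t in Set.Iic u, f t = (∫ t in Set.Iic 0, f t) + ∫ t in (0:ℝ)..u, f t := by
    intro u
    rw [← intervalIntegral.integral_Iic_sub_Iic hf.integrableOn hf.integrableOn]
    ring
  have h2 : HasDerivAt (fun u => ∫ t in (0:ℝ)..u, f t) (f z) z :=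
    intervalIntegral.integral_hasDerivAt_right (hc.intervalIntegrable _ _)
      (hc.stronglyMeasurableAtFilter _ _) hc.continuousAt
  have h3 := h2.const_add (∫ t in Set.Iic 0, f t)
  rw [show (fun u => (∫ t in Set.Iic 0, f t) + ∫ t in (0:ℝ)..u, f t)
      = fun u => ∫ t in Set.Iic u, f t from funext fun u => (h1 u).symm] at h3
  exact h3

lemma tendsto_integral_Iic_atBot {f : ℝ → ℝ} (hf : Integrable f) :
    Tendsto (fun z => ∫ t in Set.Iic z, f t) atBot (𝓝 0) := by
  have hanti : Antitone (fun i : ℝ => Set.Iic (-i)) := fun i j hij => Iic_subset_Iic.2 (by linarith)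
  have hempty : (⋂ i : ℝ, Set.Iic (-i)) = ∅ := by
    ext x
    simp only [Set.mem_iInter, Set.mem_Iic, Set.mem_empty_iff_false, iff_false, not_forall, not_le]
    exact ⟨-(x - 1), by linarith⟩
  have h := tendsto_setIntegral_of_antitone (f := f) (μ := volume)
    (fun i => measurableSet_Iic) hanti ⟨0, hf.integrableOn⟩
  rw [hempty] at h
  simp only [setIntegral_empty] at h
  have h2 : Tendsto (fun z : ℝ => ∫ t in Set.Iic z, f t) atBot (𝓝 0) := by
    have := h.comp tendsto_neg_atBot_atTop
    simpa [Function.comp_def] using this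
  exact h2

lemma hasDerivAt_stdNormalCdf (z : ℝ) : HasDerivAt stdNormalCdf (stdNormalPdf z) z :=
  hasDerivAt_integral_Iic integrable_stdNormalPdf continuous_stdNormalPdf z

lemma continuous_stdNormalCdf : Continuous stdNormalCdf :=
  continuous_iff_continuousAt.2 fun z => (hasDerivAt_stdNormalCdf z).continuousAt

lemma tendsto_stdNormalCdf_atBot : Tendsto stdNormalCdf atBot (𝓝 0) :=
  tendsto_integral_Iic_atBot integrable_stdNormalPdf

lemma stdNormalCdf_nonneg (z : ℝ) : 0 ≤ stdNormalCdf z :=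
  setIntegral_nonneg measurableSet_Iic fun t _ => (stdNormalPdf_pos t).le

lemma stdNormalCdf_le (z : ℝ) : stdNormalCdf z ≤ ∫ t, stdNormalPdf t :=
  setIntegral_le_integral integrable_stdNormalPdf
    (Filter.Eventually.of_forall fun t => (stdNormalPdf_pos t).le)

lemma continuous_skewDensity (l : ℝ) :
    Continuous (fun t => 2 * stdNormalPdf t * stdNormalCdf (l * t)) :=
  (continuous_const.mul continuous_stdNormalPdf).mul
    (continuous_stdNormalCdf.comp (continuous_const.mul continuous_id))

lemma integrable_skewDensity (l : ℝ) :
    Integrable (fun t => 2 * stdNormalPdf t * stdNormalCdf (l * t)) := by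
  have hC0 : 0 ≤ ∫ t, stdNormalPdf t := integral_nonneg fun t => (stdNormalPdf_pos t).le
  refine Integrable.mono' (g := fun t => 2 * (∫ t, stdNormalPdf t) * stdNormalPdf t)
    ((integrable_stdNormalPdf.const_mul _))
    ((continuous_skewDensity l).aestronglyMeasurable) (Eventually.of_forall fun t => ?_)
  have h1 := stdNormalCdf_nonneg (l*t)
  have h2 := stdNormalCdf_le (l*t)
  have h3 := (stdNormalPdf_pos t).le
  rw [Real.norm_eq_abs, abs_of_nonneg (by positivity)]
  have : 2 * stdNormalPdf t * stdNormalCdf (l * t)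
      ≤ 2 * (∫ t, stdNormalPdf t) * stdNormalPdf t := by
    nlinarith [mul_le_mul_of_nonneg_left h2 h3]
  simpa using this

lemma hasDerivAt_skewNormalCdf (l z : ℝ) :
    HasDerivAt (skewNormalCdf l) (2 * stdNormalPdf z * stdNormalCdf (l * z)) z :=
  hasDerivAt_integral_Iic (integrable_skewDensity l) (continuous_skewDensity l) z

lemma tendsto_skewNormalCdf_atBot (l : ℝ) : Tendsto (skewNormalCdf l) atBot (𝓝 0) :=
  tendsto_integral_Iic_atBot (integrable_skewDensity l)

lemma tendsto_sq_atBot : Tendsto (fun z : ℝ => z^2) atBot atTop := by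
  have := (tendsto_pow_atTop (two_ne_zero)).comp (tendsto_neg_atBot_atTop : Tendsto (Neg.neg : ℝ → ℝ) atBot atTop)
  simpa [Function.comp_def, neg_sq] using this

lemma tendsto_stdNormalPdf_atBot : Tendsto stdNormalPdf atBot (𝓝 0) := by
  have h1 : Tendsto (fun z : ℝ => -z^2/2) atBot atBot :=
    (tendsto_neg_atTop_atBot.comp tendsto_sq_atBot).atBot_div_const two_pos
  have h2 := (Real.tendsto_exp_atBot.comp h1).const_mul (Real.sqrt (2*π))⁻¹
  have h3 : Tendsto (fun x : ℝ => (Real.sqrt (2*π))⁻¹ * Real.exp (-x ^ 2 / 2)) atBot (𝓝 0) := by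
    simpa only [Function.comp_def, mul_zero] using h2
  exact h3

lemma hasDerivAt_stdNormalPdf (y : ℝ) : HasDerivAt stdNormalPdf (stdNormalPdf y * -y) y := by
  have hinner : HasDerivAt (fun y : ℝ => -y^2/2) (-y) y := by
    have := ((hasDerivAt_pow 2 y).neg).div_const 2
    norm_num at this
    exact this.congr_deriv (by ring)
  have h := (hinner.exp).const_mul (Real.sqrt (2*π))⁻¹
  unfold stdNormalPdf
  exact h.congr_deriv (by ring)

lemma mill : Tendsto (fun y => stdNormalCdf y / (stdNormalPdf y / (-y))) atBot (𝓝 1) := by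
  have hgg' : ∀ᶠ y : ℝ in atBot, HasDerivAt (fun y => stdNormalPdf y / (-y))
      ((stdNormalPdf y * y^2 + stdNormalPdf y)/y^2) y := by
    filter_upwards [eventually_lt_atBot (0:ℝ)] with y hy
    have hne : -y ≠ 0 := neg_ne_zero.2 hy.ne
    have hy2 : (y:ℝ)^2 ≠ 0 := pow_ne_zero 2 hy.ne
    have h := (hasDerivAt_stdNormalPdf y).div (hasDerivAt_id y).neg hne
    refine h.congr_deriv ?_
    simp only [Pi.neg_apply, id]
    field_simp
    ring
  have hg'ne : ∀ᶠ y : ℝ in atBot, (stdNormalPdf y * y^2 + stdNormalPdf y)/y^2 ≠ 0 := by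
    filter_upwards [eventually_lt_atBot (0:ℝ)] with y hy
    have h1 := stdNormalPdf_pos y
    have hy2 : (0:ℝ) < y^2 := by nlinarith
    exact ne_of_gt (div_pos (by nlinarith) hy2)
  have hginv : Tendsto (fun y : ℝ => (y^2+1)⁻¹) atBot (𝓝 0) :=
    tendsto_inv_atTop_zero.comp (tendsto_atTop_add_const_right atBot 1 tendsto_sq_atBot)
  have hdiv : Tendsto (fun y => stdNormalPdf y /
      ((stdNormalPdf y * y^2 + stdNormalPdf y)/y^2)) atBot (𝓝 1) := by
    have key : Tendsto (fun y : ℝ => 1 - (y^2+1)⁻¹) atBot (𝓝 1) := by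
      simpa using tendsto_const_nhds.sub hginv
    refine key.congr' ?_
    filter_upwards [eventually_lt_atBot (0:ℝ)] with y hy
    have h1 := (stdNormalPdf_pos y).ne'
    have hy21 : (y:ℝ)^2 + 1 ≠ 0 := by nlinarith [sq_nonneg y]
    rw [div_div_eq_mul_div,
      show stdNormalPdf y * y^2 + stdNormalPdf y = stdNormalPdf y * (y^2+1) by ring,
      show stdNormalPdf y * y^2 = stdNormalPdf y * y^2 by rfl,
      mul_div_mul_left _ _ h1]
    field_simp
    ring
  have hg : Tendsto (fun y => stdNormalPdf y / (-y)) atBot (𝓝 0) := by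
    have hinv : Tendsto (fun y : ℝ => (-y)⁻¹) atBot (𝓝 0) :=
      tendsto_inv_atTop_zero.comp tendsto_neg_atBot_atTop
    simpa [div_eq_mul_inv] using tendsto_stdNormalPdf_atBot.mul hinv
  exact HasDerivAt.lhopital_zero_atBot
    (Eventually.of_forall fun y => hasDerivAt_stdNormalCdf y)
    hgg' hg'ne tendsto_stdNormalCdf_atBot hg hdiv

lemma pdf_mul (l x : ℝ) :
    stdNormalPdf x * stdNormalPdf (l*x) = (2*π)⁻¹ * Real.exp (-(1+l^2)*x^2/2) := by
  unfold stdNormalPdf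
  have h1 : Real.sqrt (2*π) * Real.sqrt (2*π) = 2*π := Real.mul_self_sqrt (by positivity)
  have h2 : Real.exp (-x^2/2) * Real.exp (-(l*x)^2/2) = Real.exp (-(1+l^2)*x^2/2) := by
    rw [← Real.exp_add]; congr 1; ring
  rw [mul_mul_mul_comm, ← mul_inv, h1, h2]

/-- For l > 0, F(z) ~ (1/(π l (1+l²))) |z|⁻² e^{-(1+l²)z²/2} as z → -∞. -/
theorem skewNormalCdf_tail_equiv_pos (l : ℝ) (hl : 0 < l) :
    Tendsto (fun z : ℝ =>
      skewNormalCdf l z /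
        ((1 / (π * l * (1 + l ^ 2))) * |z| ^ (-2 : ℤ) * Real.exp (-(1 + l ^ 2) * z ^ 2 / 2)))
      atBot (nhds 1) := by
  have hπ := Real.pi_pos
  set a : ℝ := 1 + l^2 with ha
  have ha0 : 0 < a := by positivity
  set c : ℝ := 1 / (π * l * a) with hc
  have hc0 : 0 < c := by rw [hc]; positivity
  -- basic limits
  have hz2inv : Tendsto (fun z : ℝ => (z^2)⁻¹) atBot (𝓝 0) :=
    tendsto_inv_atTop_zero.comp tendsto_sq_atBot
  have hexp : Tendsto (fun z : ℝ => Real.exp (-a*z^2/2)) atBot (𝓝 0) := by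
    have h1 : Tendsto (fun z : ℝ => -a*z^2/2) atBot atBot := by
      have h2 : Tendsto (fun z : ℝ => a * z^2) atBot atTop :=
        tendsto_sq_atBot.const_mul_atTop ha0
      have h3 := (tendsto_neg_atTop_atBot.comp h2).atBot_div_const two_pos
      refine h3.congr fun z => ?_
      simp only [Function.comp_def]
      ring
    exact Real.tendsto_exp_atBot.comp h1
  -- the nice version of the statement
  have main : Tendsto (fun z : ℝ =>
      skewNormalCdf l z / (c * ((z^2)⁻¹ * Real.exp (-a*z^2/2)))) atBot (𝓝 1) := by
    refine HasDerivAt.lhopital_zero_atBot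
      (f' := fun z => 2 * stdNormalPdf z * stdNormalCdf (l*z))
      (g' := fun z => c * (Real.exp (-a*z^2/2) * (-(2/z^3) - a/z)))
      (Eventually.of_forall fun z => hasDerivAt_skewNormalCdf l z)
      ?_ ?_ (tendsto_skewNormalCdf_atBot l) ?_ ?_
    · -- derivative of the denominator
      filter_upwards [eventually_lt_atBot (0:ℝ)] with z hz
      have hz2 : (z:ℝ)^2 ≠ 0 := pow_ne_zero 2 hz.ne
      have h1 : HasDerivAt (fun z : ℝ => (z^2)⁻¹) (-(↑2 * z^1) / (z^2)^2) z :=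
        (hasDerivAt_pow 2 z).inv hz2
      have hinner : HasDerivAt (fun z : ℝ => -a*z^2/2) (-a * (↑2 * z^1) / 2) z :=
        ((hasDerivAt_pow 2 z).const_mul (-a)).div_const 2
      have h2 := hinner.exp
      have h := (h1.mul h2).const_mul c
      refine h.congr_deriv ?_
      field_simp [hz.ne]
      ring
    · -- nonvanishing of g'
      filter_upwards [eventually_lt_atBot (0:ℝ)] with z hz
      have hz2 : (0:ℝ) < z^2 := pow_two_pos_of_ne_zero hz.ne
      have hz3 : (z:ℝ)^3 < 0 := Odd.pow_neg ⟨1, by norm_num⟩ hz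
      have hpos : (0:ℝ) < -(2/z^3) - a/z := by
        have e1 : 2/z^3 < 0 := div_neg_of_pos_of_neg two_pos hz3
        have e2 : a/z < 0 := div_neg_of_pos_of_neg ha0 hz
        linarith
      exact (mul_pos hc0 (mul_pos (Real.exp_pos _) hpos)).ne'
    · -- denominator tends to 0
      have := (tendsto_const_nhds : Tendsto (fun _ : ℝ => c) atBot (𝓝 c)).mul (hz2inv.mul hexp)
      simpa using this
    · -- limit of the ratio of derivatives
      have hlz : Tendsto (fun z : ℝ => l * z) atBot atBot :=
        (tendsto_const_mul_atBot_of_pos hl).2 tendsto_id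
      have hmill2 : Tendsto (fun z : ℝ =>
          stdNormalCdf (l*z) / (stdNormalPdf (l*z) / (-(l*z)))) atBot (𝓝 1) := mill.comp hlz
      have hsmall : Tendsto (fun z : ℝ => 2/z^2) atBot (𝓝 0) := by
        have := hz2inv.const_mul 2
        simpa [div_eq_mul_inv] using this
      have hR : Tendsto (fun z : ℝ => a/(a + 2/z^2)) atBot (𝓝 1) := by
        have hden : Tendsto (fun z : ℝ => a + 2/z^2) atBot (𝓝 a) := by
          simpa using tendsto_const_nhds.add hsmall
        have := (tendsto_const_nhds : Tendsto (fun _ : ℝ => a) atBot (𝓝 a)).div hden ha0.ne'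
        rw [div_self ha0.ne'] at this
        exact this
      have := hmill2.mul hR
      rw [one_mul] at this
      refine this.congr' ?_
      filter_upwards [eventually_lt_atBot (0:ℝ)] with z hz
      have hz0 : (z:ℝ) ≠ 0 := hz.ne
      have hQ : stdNormalPdf (l*z) ≠ 0 := (stdNormalPdf_pos _).ne'
      have hlz0 : l*z ≠ 0 := (mul_neg_of_pos_of_neg hl hz).ne
      have hE : Real.exp (-a*z^2/2) = 2*π*(stdNormalPdf z * stdNormalPdf (l*z)) := by
        rw [pdf_mul l z, ← ha]
        field_simp
      have hpos : (0:ℝ) < -(2/z^3) - a/z := by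
        have hz3 : (z:ℝ)^3 < 0 := Odd.pow_neg ⟨1, by norm_num⟩ hz
        have e1 : 2/z^3 < 0 := div_neg_of_pos_of_neg two_pos hz3
        have e2 : a/z < 0 := div_neg_of_pos_of_neg ha0 hz
        linarith
      have hden2 : (0:ℝ) < a + 2/z^2 := by
        have : (0:ℝ) < 2/z^2 := by positivity
        linarith
      have hBne : c * (Real.exp (-a*z^2/2) * (-(2/z^3) - a/z)) ≠ 0 :=
        (mul_pos hc0 (mul_pos (Real.exp_pos _) hpos)).ne'
      have hDne : stdNormalPdf (l*z) * (a + 2/z^2) ≠ 0 :=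
        (mul_pos (stdNormalPdf_pos _) hden2).ne'
      rw [div_div_eq_mul_div, div_mul_div_comm,
        div_eq_div_iff hDne hBne, hE, hc]
      field_simp
      ring
  refine main.congr fun z => ?_
  have hzpow : |z| ^ (-2:ℤ) = ((z:ℝ)^2)⁻¹ := by
    rw [zpow_neg, zpow_two, abs_mul_abs_self, ← pow_two]
  rw [hzpow]
  ring
end

section
/- The standard normal quantile function satisfies Φ⁻¹(u) ~ -√(-2 log(u √(-4π log u))) as u → 0⁺, and in particular Φ⁻¹(u) ~ -√(-2 log u). -/
open Real MeasureTheory Filter Set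

lemma gauss_int (z : ℝ) : IntegrableOn (fun t : ℝ => Real.exp (-t^2/2)) (Iic z) := by
  have h : (fun t : ℝ => Real.exp (-t^2/2)) = fun t => Real.exp (-(1/2:ℝ)*t^2) := by
    ext t; congr 1; ring
  rw [h]; exact (integrable_exp_neg_mul_sq (by norm_num)).integrableOn

lemma hd_exp (x : ℝ) : HasDerivAt (fun t : ℝ => Real.exp (-t^2/2)) (Real.exp (-x^2/2) * (-x)) x := by
  have h2 : HasDerivAt (fun t : ℝ => t^2) (2*x) x := by simpa using hasDerivAt_pow 2 x
  have h1 : HasDerivAt (fun t : ℝ => -t^2/2) (-x) x := by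
    have h3 := (h2.neg).div_const 2
    refine h3.congr_deriv ?_
    ring
  exact h1.exp

lemma sq_atTop : Tendsto (fun t : ℝ => t^2) atBot atTop := by
  rw [tendsto_atTop]
  intro b
  filter_upwards [eventually_le_atBot (-(max b 1))] with t ht
  nlinarith [le_max_left b 1, le_max_right b 1, sq_nonneg (t + max b 1)]

lemma tendsto_exp_sq_bot : Tendsto (fun t : ℝ => Real.exp (-t^2/2)) atBot (nhds 0) := by
  apply Real.tendsto_exp_atBot.comp
  have h2 := (tendsto_neg_atTop_atBot.comp sq_atTop).atBot_div_const (show (0:ℝ) < 2 by norm_num)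
  simpa [Function.comp, neg_div] using h2

lemma key_int (z : ℝ) : ∫ t in Iic z, t * Real.exp (-t^2/2) = -Real.exp (-z^2/2) := by
  have hderiv : ∀ x ∈ Iio z, HasDerivAt (fun t : ℝ => -Real.exp (-t^2/2)) (x * Real.exp (-x^2/2)) x := by
    intro x _
    have h := (hd_exp x).neg
    exact h.congr_deriv (by ring)
  have hint : IntegrableOn (fun t : ℝ => t * Real.exp (-t^2/2)) (Iic z) := by
    have h : (fun t : ℝ => t * Real.exp (-t^2/2)) = fun t => t * Real.exp (-(1/2:ℝ)*t^2) := by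
      ext t; congr 2; ring
    rw [h]; exact (integrable_mul_exp_neg_mul_sq (by norm_num)).integrableOn
  have hcont : ContinuousWithinAt (fun t : ℝ => -Real.exp (-t^2/2)) (Iic z) z :=
    (Continuous.continuousWithinAt (by continuity))
  have hlim : Tendsto (fun t : ℝ => -Real.exp (-t^2/2)) atBot (nhds 0) := by
    simpa using tendsto_exp_sq_bot.neg
  have h := MeasureTheory.integral_Iic_of_hasDerivAt_of_tendsto hcont hderiv hint hlim
  simpa using h


lemma cont_gauss : Continuous fun t : ℝ => Real.exp (-t^2/2) :=
  Real.continuous_exp.comp ((continuous_pow 2).neg.div_const 2)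
lemma cont_ratio : Continuous fun t : ℝ => -t/(t^2+1) :=
  continuous_id.neg.div ((continuous_pow 2).add continuous_const) (fun x => by positivity)
lemma gauss_int_t (z : ℝ) : IntegrableOn (fun t : ℝ => t * Real.exp (-t^2/2)) (Iic z) := by
  have h : (fun t : ℝ => t * Real.exp (-t^2/2)) = fun t => t * Real.exp (-(1/2:ℝ)*t^2) := by
    ext t; congr 2; ring
  rw [h]; exact (integrable_mul_exp_neg_mul_sq (by norm_num)).integrableOn

lemma int_upper {z : ℝ} (hz : z < 0) :
    ∫ t in Iic z, Real.exp (-t^2/2) ≤ Real.exp (-z^2/2) / (-z) := by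
  have hne : z ≠ 0 := ne_of_lt hz
  have hmono : ∫ t in Iic z, Real.exp (-t^2/2) ≤ ∫ t in Iic z, z⁻¹ * (t * Real.exp (-t^2/2)) := by
    apply setIntegral_mono_on (gauss_int z) ((gauss_int_t z).const_mul _) measurableSet_Iic
    intro t ht
    have h1 : (1:ℝ) ≤ z⁻¹ * t := by
      have h2 : z⁻¹ * z ≤ z⁻¹ * t := mul_le_mul_of_nonpos_left ht.out (inv_nonpos.mpr hz.le)
      rwa [inv_mul_cancel₀ hne] at h2
    calc Real.exp (-t^2/2) = 1 * Real.exp (-t^2/2) := (one_mul _).symm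
      _ ≤ (z⁻¹ * t) * Real.exp (-t^2/2) := by
          apply mul_le_mul_of_nonneg_right h1 (Real.exp_nonneg _)
      _ = z⁻¹ * (t * Real.exp (-t^2/2)) := by ring
  rw [MeasureTheory.integral_const_mul, key_int] at hmono
  calc ∫ t in Iic z, Real.exp (-t^2/2) ≤ z⁻¹ * -Real.exp (-z^2/2) := hmono
    _ = Real.exp (-z^2/2) / (-z) := by
        field_simp

lemma int_lower {z : ℝ} (hz : z < 0) :
    (-z)/(z^2+1) * Real.exp (-z^2/2) ≤ ∫ t in Iic z, Real.exp (-t^2/2) := by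
  set f : ℝ → ℝ := fun t => -t/(t^2+1) * Real.exp (-t^2/2) with hf
  set f' : ℝ → ℝ := fun t => (t^4+2*t^2-1)/((t^2+1)^2) * Real.exp (-t^2/2) with hf'
  have hd : ∀ x : ℝ, HasDerivAt f (f' x) x := by
    intro x
    have hne : (x:ℝ)^2+1 ≠ 0 := by positivity
    have h1 : HasDerivAt (fun t : ℝ => -t/(t^2+1)) ((x^2-1)/((x^2+1)^2)) x := by
      have hnum : HasDerivAt (fun t : ℝ => -t) (-1 : ℝ) x := (hasDerivAt_id x).neg
      have hden : HasDerivAt (fun t : ℝ => t^2+1) (2*x) x := by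
        simpa using (hasDerivAt_pow 2 x).add_const 1
      have := hnum.div hden hne
      refine this.congr_deriv ?_
      ring
    have := h1.mul (hd_exp x)
    refine this.congr_deriv ?_
    simp only [hf']
    field_simp
    ring
  have hfle : ∀ t ∈ Iic z, f' t ≤ Real.exp (-t^2/2) := by
    intro t _
    simp only [hf']
    have h1 : (t^4+2*t^2-1)/((t^2+1)^2) ≤ 1 := by
      rw [div_le_one (by positivity)]
      nlinarith
    calc (t^4+2*t^2-1)/((t^2+1)^2) * Real.exp (-t^2/2) ≤ 1 * Real.exp (-t^2/2) :=
          mul_le_mul_of_nonneg_right h1 (Real.exp_nonneg _)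
      _ = Real.exp (-t^2/2) := one_mul _
  have hint : IntegrableOn f' (Iic z) := by
    apply Integrable.mono' (gauss_int z)
    · have c1 : Continuous fun t : ℝ => (t^4+2*t^2-1)/((t^2+1)^2) :=
        Continuous.div (by fun_prop) (by fun_prop) (fun x => by positivity)
      exact ((c1.mul cont_gauss).aestronglyMeasurable).congr (by simp [hf']; exact Filter.EventuallyEq.rfl)
    · filter_upwards with t
      simp only [hf', norm_mul, Real.norm_eq_abs, abs_of_nonneg (Real.exp_nonneg (-t^2/2))]
      have h1 : |(t^4+2*t^2-1)/((t^2+1)^2)| ≤ 1 := by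
        rw [abs_div, div_le_one (by positivity)]
        rw [abs_of_nonneg (by positivity : (0:ℝ) ≤ (t^2+1)^2)]
        rw [abs_le]
        constructor <;> nlinarith
      calc |(t^4+2*t^2-1)/((t^2+1)^2)| * Real.exp (-t^2/2) ≤ 1 * Real.exp (-t^2/2) :=
            mul_le_mul_of_nonneg_right h1 (Real.exp_nonneg _)
        _ = Real.exp (-t^2/2) := one_mul _
  have hlim : Tendsto f atBot (nhds 0) := by
    apply squeeze_zero_norm (a := fun t : ℝ => Real.exp (-t^2/2)) ?_ ?_
    · intro t
      simp only [hf, norm_mul, Real.norm_eq_abs, abs_of_nonneg (Real.exp_nonneg (-t^2/2))]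
      have h1 : |(-t)/(t^2+1)| ≤ 1 := by
        rw [abs_div, div_le_one (by positivity), abs_of_nonneg (by positivity : (0:ℝ) ≤ t^2+1)]
        rw [abs_le]; constructor <;> nlinarith [sq_nonneg (t+1), sq_nonneg (t-1)]
      calc |(-t)/(t^2+1)| * Real.exp (-t^2/2) ≤ 1 * Real.exp (-t^2/2) :=
            mul_le_mul_of_nonneg_right h1 (Real.exp_nonneg _)
        _ = Real.exp (-t^2/2) := one_mul _
    · exact tendsto_exp_sq_bot
  have hcont : ContinuousWithinAt f (Iic z) z := by
    apply Continuous.continuousWithinAt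
    exact cont_ratio.mul cont_gauss
  have heq : ∫ t in Iic z, f' t = f z := by
    have := MeasureTheory.integral_Iic_of_hasDerivAt_of_tendsto hcont (fun x _ => hd x) hint hlim
    simpa using this
  have hle : ∫ t in Iic z, f' t ≤ ∫ t in Iic z, Real.exp (-t^2/2) :=
    setIntegral_mono_on hint (gauss_int z) measurableSet_Iic hfle
  rw [heq] at hle
  calc (-z)/(z^2+1) * Real.exp (-z^2/2) = f z := by rw [hf]
    _ ≤ _ := hle




lemma cdf_eq (z : ℝ) :
    stdNormalCdf z = (Real.sqrt (2*π))⁻¹ * ∫ t in Iic z, Real.exp (-t^2/2) := by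
  unfold stdNormalCdf stdNormalPdf
  rw [MeasureTheory.integral_const_mul]

lemma sqrt2pi_pos : 0 < Real.sqrt (2*π) := Real.sqrt_pos.mpr (by positivity)
lemma sqrt2pi_one_le : 1 ≤ Real.sqrt (2*π) := by
  rw [show (1:ℝ) = Real.sqrt 1 from (Real.sqrt_one).symm]
  exact Real.sqrt_le_sqrt (by nlinarith [Real.pi_gt_three])

lemma cdf_upper {z : ℝ} (hz : z < 0) :
    stdNormalCdf z ≤ (Real.sqrt (2*π))⁻¹ * (Real.exp (-z^2/2) / (-z)) := by
  rw [cdf_eq]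
  exact mul_le_mul_of_nonneg_left (int_upper hz) (by positivity)

lemma cdf_lower {z : ℝ} (hz : z < 0) :
    (Real.sqrt (2*π))⁻¹ * ((-z)/(z^2+1) * Real.exp (-z^2/2)) ≤ stdNormalCdf z := by
  rw [cdf_eq]
  exact mul_le_mul_of_nonneg_left (int_lower hz) (by positivity)

lemma cdf_pos {z : ℝ} (hz : z < 0) : 0 < stdNormalCdf z := by
  refine lt_of_lt_of_le ?_ (cdf_lower hz)
  have h1 : 0 < -z := by linarith
  positivity

lemma cdf_mono : Monotone stdNormalCdf := by
  intro a b hab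
  rw [cdf_eq, cdf_eq]
  apply mul_le_mul_of_nonneg_left _ (by positivity)
  apply setIntegral_mono_set (gauss_int b)
  · filter_upwards with t using Real.exp_nonneg _
  · exact HasSubset.Subset.eventuallyLE (Iic_subset_Iic.mpr hab)

lemma helper_log_div : Tendsto (fun x : ℝ => Real.log (x+1) / x) atTop (nhds 0) := by
  have h1 : Tendsto (fun x : ℝ => Real.log (x+1) / (x+1)) atTop (nhds 0) :=
    Real.isLittleO_log_id_atTop.tendsto_div_nhds_zero.comp
      (tendsto_atTop_add_const_right _ 1 tendsto_id)
  have h2 : Tendsto (fun x : ℝ => (x+1)/x) atTop (nhds 1) := by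
    have h3 : Tendsto (fun x : ℝ => 1 + x⁻¹) atTop (nhds 1) := by
      simpa using (tendsto_const_nhds (x := (1:ℝ))).add tendsto_inv_atTop_zero
    apply h3.congr'
    filter_upwards [eventually_gt_atTop (0:ℝ)] with x hx
    field_simp
  have h4 := h1.mul h2
  rw [zero_mul] at h4
  apply h4.congr'
  filter_upwards [eventually_gt_atTop (0:ℝ)] with x hx
  field_simp

lemma bound_tendsto (C : ℝ) :
    Tendsto (fun z : ℝ => (C + 2*Real.log (z^2+1)) / z^2) atBot (nhds 0) := by
  have hg : Tendsto (fun x : ℝ => (C + 2*Real.log (x+1)) / x) atTop (nhds 0) := by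
    have h1 : Tendsto (fun x : ℝ => C / x) atTop (nhds 0) :=
      tendsto_const_nhds.div_atTop tendsto_id
    have h2 := helper_log_div.const_mul (2:ℝ)
    rw [mul_zero] at h2
    have h3 := h1.add h2
    rw [add_zero] at h3
    apply h3.congr
    intro x
    ring
  exact hg.comp sq_atTop

lemma ratio_tendsto :
    Tendsto (fun z : ℝ => -2 * Real.log (stdNormalCdf z) / z^2) atBot (nhds 1) := by
  set L := Real.log (Real.sqrt (2*π)) with hL
  have hL0 : 0 ≤ L := Real.log_nonneg sqrt2pi_one_le
  have hupper : Tendsto (fun z : ℝ => 1 + (2*L + 2*Real.log (z^2+1))/z^2) atBot (nhds 1) := by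
    simpa using (tendsto_const_nhds (x := (1:ℝ))).add (bound_tendsto (2*L))
  apply tendsto_of_tendsto_of_tendsto_of_le_of_le' tendsto_const_nhds hupper
  · -- 1 ≤ ratio eventually
    filter_upwards [eventually_le_atBot (-1:ℝ)] with z hz
    have hzneg : z < 0 := by linarith
    have hmz : (0:ℝ) < -z := by linarith
    have hz2 : (0:ℝ) < z^2 := by nlinarith
    have hpos := cdf_pos hzneg
    have h1 := Real.log_le_log hpos (cdf_upper hzneg)
    rw [Real.log_mul (by positivity) (by positivity),
      Real.log_div (by positivity) (ne_of_gt hmz),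
      Real.log_exp, Real.log_inv] at h1
    have hlz : 0 ≤ Real.log (-z) := Real.log_nonneg (by linarith)
    rw [le_div_iff₀ hz2]
    nlinarith
  · -- ratio ≤ 1 + bound eventually
    filter_upwards [eventually_le_atBot (-1:ℝ)] with z hz
    have hzneg : z < 0 := by linarith
    have hmz : (0:ℝ) < -z := by linarith
    have hz2 : (0:ℝ) < z^2 := by nlinarith
    have hpos : (0:ℝ) < (Real.sqrt (2*π))⁻¹ * ((-z)/(z^2+1) * Real.exp (-z^2/2)) := by
      positivity
    have h1 := Real.log_le_log hpos (cdf_lower hzneg)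
    rw [Real.log_mul (by positivity) (by positivity),
      Real.log_mul (by positivity) (by positivity),
      Real.log_div (ne_of_gt hmz) (by positivity),
      Real.log_exp, Real.log_inv] at h1
    have hlz : 0 ≤ Real.log (-z) := Real.log_nonneg (by linarith)
    have key : -2*Real.log (stdNormalCdf z) ≤ z^2 + (2*L + 2*Real.log (z^2+1)) := by
      nlinarith
    calc -2 * Real.log (stdNormalCdf z) / z^2
        ≤ (z^2 + (2*L + 2*Real.log (z^2+1)))/z^2 := by
          exact div_le_div_of_nonneg_right key hz2.le
      _ = 1 + (2*L + 2*Real.log (z^2+1))/z^2 := by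
          rw [add_div, div_self (ne_of_gt hz2)]




lemma mem_Ioo_ev {ε : ℝ} (hε : 0 < ε) : ∀ᶠ u in nhdsWithin (0:ℝ) (Set.Ioi 0), u ∈ Ioo (0:ℝ) ε :=
  eventually_of_mem (Ioo_mem_nhdsGT_of_mem ⟨le_refl 0, hε⟩) (fun u hu => hu)

/-- The standard normal quantile function satisfies
Φ⁻¹(u) ~ -√(-2 log(u √(-4π log u))) as u → 0⁺, and in particular
Φ⁻¹(u) ~ -√(-2 log u). -/
theorem stdNormal_quantile_asymp (Q : ℝ → ℝ)
    (hQ : ∀ u ∈ Set.Ioo (0 : ℝ) 1, stdNormalCdf (Q u) = u) :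
    Tendsto (fun u : ℝ =>
      Q u / (-Real.sqrt (-2 * Real.log (u * Real.sqrt (-(4 * π) * Real.log u)))))
      (nhdsWithin 0 (Set.Ioi 0)) (nhds 1) ∧
    Tendsto (fun u : ℝ => Q u / (-Real.sqrt (-2 * Real.log u)))
      (nhdsWithin 0 (Set.Ioi 0)) (nhds 1) := by
  have hQbot : Tendsto Q (nhdsWithin (0:ℝ) (Set.Ioi 0)) atBot := by
    rw [tendsto_atBot]
    intro M
    set M' := min M (-1) with hM'def
    have hM' : M' < 0 := lt_of_le_of_lt (min_le_right _ _) (by norm_num)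
    have hc : 0 < stdNormalCdf M' := cdf_pos hM'
    filter_upwards [mem_Ioo_ev (lt_min hc one_pos)] with u hu
    have hu1 : u ∈ Ioo (0:ℝ) 1 := ⟨hu.1, lt_of_lt_of_le hu.2 (min_le_right _ _)⟩
    by_contra h
    push_neg at h
    have h2 : M' ≤ Q u := le_trans (min_le_left M (-1)) h.le
    have h3 := cdf_mono h2
    rw [hQ u hu1] at h3
    have h4 : u < stdNormalCdf M' := lt_of_lt_of_le hu.2 (min_le_left _ _)
    linarith
  have hIoo : ∀ᶠ u in nhdsWithin (0:ℝ) (Set.Ioi 0), u ∈ Ioo (0:ℝ) 1 := mem_Ioo_ev one_pos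
  have hQneg : ∀ᶠ u in nhdsWithin (0:ℝ) (Set.Ioi 0), Q u ≤ -1 :=
    hQbot.eventually (eventually_le_atBot (-1))
  have hlogneg : ∀ᶠ u in nhdsWithin (0:ℝ) (Set.Ioi 0), Real.log u < 0 := by
    filter_upwards [hIoo] with u hu
    exact Real.log_neg hu.1 hu.2
  -- step 1 : -2 log u / (Q u)^2 → 1
  have hlogu : Tendsto (fun u : ℝ => -2 * Real.log u / (Q u)^2)
      (nhdsWithin (0:ℝ) (Set.Ioi 0)) (nhds 1) := by
    apply (ratio_tendsto.comp hQbot).congr'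
    filter_upwards [hIoo] with u hu
    simp only [Function.comp]
    rw [hQ u hu]
  -- step 2 : sqrt(-2 log u)/(-Q u) → 1
  have hsq : Tendsto (fun u : ℝ => Real.sqrt (-2 * Real.log u) / (-Q u))
      (nhdsWithin (0:ℝ) (Set.Ioi 0)) (nhds 1) := by
    have h1 := (Real.continuous_sqrt.tendsto 1).comp hlogu
    rw [Real.sqrt_one] at h1
    apply h1.congr'
    filter_upwards [hlogneg, hQneg] with u hlu hqu
    simp only [Function.comp]
    rw [Real.sqrt_div (by linarith : (0:ℝ) ≤ -2 * Real.log u), Real.sqrt_sq_eq_abs,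
      abs_of_neg (by linarith : Q u < 0)]
  -- step 3 : second limit
  have hsecond : Tendsto (fun u : ℝ => Q u / (-Real.sqrt (-2 * Real.log u)))
      (nhdsWithin (0:ℝ) (Set.Ioi 0)) (nhds 1) := by
    have h1 := hsq.inv₀ one_ne_zero
    rw [inv_one] at h1
    apply h1.congr
    intro u
    rw [inv_div]
    ring
  refine ⟨?_, hsecond⟩
  -- step 4 : denominator comparison
  have hT : Tendsto (fun u : ℝ => -Real.log u) (nhdsWithin (0:ℝ) (Set.Ioi 0)) atTop :=
    tendsto_neg_atBot_atTop.comp Real.tendsto_log_nhdsGT_zero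
  have hA : Tendsto (fun u : ℝ =>
      (Real.log (4*π) + Real.log (-Real.log u)) / (2 * (-Real.log u)))
      (nhdsWithin (0:ℝ) (Set.Ioi 0)) (nhds 0) := by
    have hg : Tendsto (fun t : ℝ => (Real.log (4*π) + Real.log t) / (2*t)) atTop (nhds 0) := by
      have h1 : Tendsto (fun t : ℝ => Real.log (4*π) / (2*t)) atTop (nhds 0) :=
        tendsto_const_nhds.div_atTop (tendsto_id.const_mul_atTop (by norm_num))
      have h2 : Tendsto (fun t : ℝ => Real.log t / (2*t)) atTop (nhds 0) := by
        have h3 := Real.isLittleO_log_id_atTop.tendsto_div_nhds_zero.div_const (2:ℝ)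
        rw [zero_div] at h3
        apply h3.congr
        intro t
        simp only [id]
        rw [div_div]
        ring_nf
      have h4 := h1.add h2
      rw [add_zero] at h4
      apply h4.congr
      intro t
      rw [← add_div]
    exact hg.comp hT
  -- D1 u = -2 log(u * sqrt(-(4π) log u)) ; show D1/(-2 log u) → 1
  set D1 : ℝ → ℝ := fun u => -2 * Real.log (u * Real.sqrt (-(4*π) * Real.log u)) with hD1def
  have hD1eq : ∀ᶠ u in nhdsWithin (0:ℝ) (Set.Ioi 0),
      D1 u = -2 * Real.log u - (Real.log (4*π) + Real.log (-Real.log u)) := by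
    filter_upwards [hIoo, hlogneg] with u hu hlu
    have hA0 : (0:ℝ) < -(4*π) * Real.log u := by
      have : (0:ℝ) < 4*π := by positivity
      nlinarith
    have hsqrt : (0:ℝ) < Real.sqrt (-(4*π) * Real.log u) := Real.sqrt_pos.mpr hA0
    simp only [hD1def]
    rw [Real.log_mul (ne_of_gt hu.1) (ne_of_gt hsqrt),
      Real.log_sqrt hA0.le,
      show -(4*π) * Real.log u = (4*π) * (-Real.log u) by ring,
      Real.log_mul (by positivity) (by linarith)]
    ring
  have hDratio : Tendsto (fun u : ℝ => D1 u / (-2 * Real.log u))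
      (nhdsWithin (0:ℝ) (Set.Ioi 0)) (nhds 1) := by
    have h1 := (tendsto_const_nhds (x := (1:ℝ))).sub hA
    rw [sub_zero] at h1
    apply h1.congr'
    filter_upwards [hD1eq, hlogneg] with u hDu hlu
    rw [hDu, sub_div]
    congr 1
    · rw [div_self (by linarith : (-2) * Real.log u ≠ 0)]
    · congr 1
      ring
  -- factor : sqrt(-2 log u)/sqrt(D1 u) → 1
  have hfac : Tendsto (fun u : ℝ => Real.sqrt (-2 * Real.log u) / Real.sqrt (D1 u))
      (nhdsWithin (0:ℝ) (Set.Ioi 0)) (nhds 1) := by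
    have h0 := hDratio.inv₀ one_ne_zero
    rw [inv_one] at h0
    have h1 := (Real.continuous_sqrt.tendsto 1).comp h0
    rw [Real.sqrt_one] at h1
    apply h1.congr'
    filter_upwards [hlogneg] with u hlu
    simp only [Function.comp]
    rw [inv_div, Real.sqrt_div (by linarith : (0:ℝ) ≤ -2 * Real.log u)]
  -- combine
  have h5 := hsecond.mul hfac
  rw [mul_one] at h5
  apply h5.congr'
  filter_upwards [hlogneg] with u hlu
  have hs2 : (0:ℝ) < Real.sqrt (-2 * Real.log u) := Real.sqrt_pos.mpr (by linarith)
  rw [div_mul_div_comm, mul_comm (Q u) (Real.sqrt (-2 * Real.log u)),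
    show -Real.sqrt (-2 * Real.log u) * Real.sqrt (D1 u)
      = Real.sqrt (-2 * Real.log u) * (-Real.sqrt (D1 u)) by ring,
    mul_div_mul_left _ _ (ne_of_gt hs2)]
end
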